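/- Let |φ⟩ = α_1|1⟩ + ⋯ + α_N|N⟩ ∈ ℂ^N be a unit vector, and suppose |φ⟩ is ε-far in trace distance from every proper state, for some ε > 0. Then imp(|φ⟩) > ε². -/

import Mathlib

/-- `|φ⟩` is ε-far in trace distance from every proper state
`(1/√N) ∑ (−1)^{x_i} |i⟩`, where the trace distance between pure states is
`√(1 − |⟨φ|ψ⟩|²)`. -/
def FarFromProper {N : ℕ} (α : Fin N → ℂ) (ε : ℝ) : Prop :=
  ∀ x : Fin N → Bool,
    ε ≤ Real.sqrt (1 - ‖∑ i, (starRingEnd ℂ) (α i) *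
      ((if x i then -1 else 1) / (Real.sqrt N : ℂ))‖ ^ 2)

/-- The impropriety of `|φ⟩ = ∑ α_i |i⟩`: the infimum over complex numbers `r` with
`|r| = 1/N` of `∑ |α_i² − r|`. -/
noncomputable def impropriety {N : ℕ} (α : Fin N → ℂ) : ℝ :=
  sInf {t | ∃ r : ℂ, ‖r‖ = 1 / N ∧ t = ∑ i, ‖α i ^ 2 - r‖}

lemma normsq_eq (z : ℂ) : ‖z‖ ^ 2 = z.re ^ 2 + z.im ^ 2 := by
  rw [Complex.sq_norm, Complex.normSq_apply]; ring

lemma key_pointwise (a s : ℂ) (h : 0 ≤ ((starRingEnd ℂ) a * s).re) :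
    ‖a‖ ^ 2 + ‖s‖ ^ 2 - 2 * ((starRingEnd ℂ) a * s).re ≤ ‖a ^ 2 - s ^ 2‖ := by
  have h1 : ‖a - s‖ ^ 2 = ‖a‖ ^ 2 + ‖s‖ ^ 2 - 2 * ((starRingEnd ℂ) a * s).re := by
    rw [normsq_eq, normsq_eq, normsq_eq]
    simp only [Complex.sub_re, Complex.sub_im, Complex.mul_re, Complex.conj_re,
      Complex.conj_im]
    ring
  have h2 : ‖a + s‖ ^ 2 = ‖a‖ ^ 2 + ‖s‖ ^ 2 + 2 * ((starRingEnd ℂ) a * s).re := by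
    rw [normsq_eq, normsq_eq, normsq_eq]
    simp only [Complex.add_re, Complex.add_im, Complex.mul_re, Complex.conj_re,
      Complex.conj_im]
    ring
  have h3 : ‖a - s‖ ≤ ‖a + s‖ := by
    nlinarith [norm_nonneg (a - s), norm_nonneg (a + s)]
  have h4 : ‖a ^ 2 - s ^ 2‖ = ‖a - s‖ * ‖a + s‖ := by
    rw [← norm_mul]; congr 1; ring
  calc ‖a‖ ^ 2 + ‖s‖ ^ 2 - 2 * ((starRingEnd ℂ) a * s).re = ‖a - s‖ ^ 2 := h1.symm
    _ ≤ ‖a - s‖ * ‖a + s‖ := by rw [pow_two]; exact mul_le_mul_of_nonneg_left h3 (norm_nonneg _)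
    _ = ‖a ^ 2 - s ^ 2‖ := h4.symm

lemma key_pointwise_abs (a s : ℂ) :
    ‖a‖ ^ 2 + ‖s‖ ^ 2 - 2 * |((starRingEnd ℂ) a * s).re| ≤ ‖a ^ 2 - s ^ 2‖ := by
  rcases le_or_gt 0 (((starRingEnd ℂ) a * s).re) with h | h
  · rw [abs_of_nonneg h]; exact key_pointwise a s h
  · have h' : 0 ≤ ((starRingEnd ℂ) a * (-s)).re := by
      simp only [mul_neg, Complex.neg_re]; linarith
    have hk := key_pointwise a (-s) h'
    rw [abs_of_neg h]
    simpa only [mul_neg, Complex.neg_re, norm_neg, neg_sq, neg_neg] using hk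

/-- if the unit vector |φ⟩ is ε-far from every proper state, then
imp(|φ⟩) > ε². -/
theorem impropriety_of_far {N : ℕ} (α : Fin N → ℂ) (hα : ∑ i, ‖α i‖ ^ 2 = 1)
    (ε : ℝ) (hε : 0 < ε) (hfar : FarFromProper α ε) :
    ε ^ 2 < impropriety α := by
  have hN : 0 < N := by
    rcases Nat.eq_zero_or_pos N with h | h
    · subst h; simp at hα
    · exact h
  have hNR : (0 : ℝ) < N := by exact_mod_cast hN
  set D : (Fin N → Bool) → ℝ := fun x =>
    ‖∑ i, (starRingEnd ℂ) (α i) * ((if x i then -1 else 1) / (Real.sqrt N : ℂ))‖ with hD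
  have key : ∀ x : Fin N → Bool, ε ^ 2 ≤ 1 - (D x) ^ 2 :=
    fun x => (Real.le_sqrt' hε).mp (hfar x)
  have hε1 : ε ^ 2 ≤ 1 := by
    have h0 := key (fun _ => false)
    nlinarith [sq_nonneg (D (fun _ => false))]
  have hDle : ∀ x, D x ≤ Real.sqrt (1 - ε ^ 2) :=
    fun x => Real.le_sqrt_of_sq_le (by linarith [key x])
  have hL : ∀ t ∈ {t | ∃ r : ℂ, ‖r‖ = 1 / N ∧ t = ∑ i, ‖α i ^ 2 - r‖},
      2 - 2 * Real.sqrt (1 - ε ^ 2) ≤ t := by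
    rintro t ⟨r, hr, rfl⟩
    obtain ⟨s, hs⟩ := IsAlgClosed.exists_pow_nat_eq r (n := 2) (by norm_num)
    have hs2 : ‖s‖ ^ 2 = 1 / N := by rw [← norm_pow, hs, hr]
    set x : Fin N → Bool := fun i => decide (((starRingEnd ℂ) (α i) * s).re < 0) with hx
    set T := ∑ i, |((starRingEnd ℂ) (α i) * s).re| with hT
    have hsign : ∀ i, ((if x i then (-1 : ℂ) else 1) * ((starRingEnd ℂ) (α i) * s)).re
        = |((starRingEnd ℂ) (α i) * s).re| := by
      intro i
      by_cases hc : ((starRingEnd ℂ) (α i) * s).re < 0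
      · rw [if_pos (by simp only [hx, decide_eq_true_eq]; exact hc), neg_one_mul,
          Complex.neg_re, abs_of_neg hc]
      · rw [if_neg (by simp only [hx, decide_eq_true_eq]; exact hc), one_mul,
          abs_of_nonneg (not_lt.mp hc)]
    have hsN : (Real.sqrt N : ℂ) ≠ 0 := by
      simp only [ne_eq, Complex.ofReal_eq_zero]
      positivity
    have hTD : T ≤ D x := by
      have hfac : ((Real.sqrt N : ℂ) * s) *
          (∑ i, (starRingEnd ℂ) (α i) * ((if x i then -1 else 1) / (Real.sqrt N : ℂ)))
          = ∑ i, (if x i then (-1 : ℂ) else 1) * ((starRingEnd ℂ) (α i) * s) := by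
        rw [Finset.mul_sum]
        refine Finset.sum_congr rfl fun i _ => ?_
        field_simp
      have hnorm : ‖(Real.sqrt N : ℂ) * s‖ = 1 := by
        have hss : ‖s‖ = Real.sqrt (1 / N) := by
          rw [← Real.sqrt_sq (norm_nonneg s), hs2]
        rw [norm_mul, Complex.norm_real, Real.norm_eq_abs,
          abs_of_nonneg (Real.sqrt_nonneg _), hss,
          ← Real.sqrt_mul (Nat.cast_nonneg N), mul_one_div, div_self (ne_of_gt hNR),
          Real.sqrt_one]
      calc T = (∑ i, (if x i then (-1 : ℂ) else 1) * ((starRingEnd ℂ) (α i) * s)).re := by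
            rw [Complex.re_sum]
            exact (Finset.sum_congr rfl fun i _ => (hsign i)).symm
        _ ≤ ‖∑ i, (if x i then (-1 : ℂ) else 1) * ((starRingEnd ℂ) (α i) * s)‖ :=
            Complex.re_le_norm _
        _ = ‖(Real.sqrt N : ℂ) * s‖ * D x := by rw [← hfac, norm_mul, hD]
        _ = D x := by rw [hnorm, one_mul]
    have hptw : ∀ i, ‖α i‖ ^ 2 + ‖s‖ ^ 2 - 2 * |((starRingEnd ℂ) (α i) * s).re|
        ≤ ‖α i ^ 2 - r‖ := by
      intro i; rw [← hs]; exact key_pointwise_abs (α i) s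
    have hsum : ∑ i : Fin N, (‖α i‖ ^ 2 + ‖s‖ ^ 2 - 2 * |((starRingEnd ℂ) (α i) * s).re|)
        = 2 - 2 * T := by
      rw [Finset.sum_sub_distrib, Finset.sum_add_distrib, Finset.sum_const,
        Finset.card_univ, Fintype.card_fin, ← Finset.mul_sum, ← hT, hα, hs2,
        nsmul_eq_mul, mul_one_div, div_self (ne_of_gt hNR)]
      ring
    have hge : 2 - 2 * T ≤ ∑ i, ‖α i ^ 2 - r‖ := by
      rw [← hsum]
      exact Finset.sum_le_sum fun i _ => hptw i
    have := hDle x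
    linarith
  have hne : {t | ∃ r : ℂ, ‖r‖ = 1 / N ∧ t = ∑ i, ‖α i ^ 2 - r‖}.Nonempty := by
    refine ⟨∑ i, ‖α i ^ 2 - (1 / N : ℂ)‖, (1 / N : ℂ), ?_, rfl⟩
    rw [norm_div, norm_one, Complex.norm_natCast]
  have hInf : 2 - 2 * Real.sqrt (1 - ε ^ 2) ≤ impropriety α := le_csInf hne hL
  have hnn : (0 : ℝ) ≤ 1 - ε ^ 2 := by linarith
  have hsq := Real.sq_sqrt hnn
  have hu : Real.sqrt (1 - ε ^ 2) < 1 := by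
    nlinarith [Real.sqrt_nonneg (1 - ε ^ 2)]
  have h1u : (0 : ℝ) < 1 - Real.sqrt (1 - ε ^ 2) := by linarith
  nlinarith [mul_pos h1u h1u]
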